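/- Difference identity on the core: suppose G is d-regular with d ≥ 1, t ≥ 1, vertex i is a core vertex at times t−1 and t, and every vertex j ∈ {i} ∪ N(i) has the same core status at times t−1 and t (z_j^t = z_j^{t−1}). Then x_i^{t+1} − x_i^t = (x_i^t − x_i^{t−1})/2 + (1/(2d)) · ∑_{j adjacent to i, j core at time t} (x_j^t − x_j^{t−1}). -/

import Mathlib

/-- **Difference identity on the core.** Suppose `G` is `d`-regular with `d ≥ 1`, `t ≥ 1`,
vertex `i` is a core vertex at times `t−1` and `t`, and every `j ∈ {i} ∪ N(i)` has the same
core status at times `t−1` and `t`. Then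
`x_i^{t+1} − x_i^t = (x_i^t − x_i^{t−1})/2 + (1/(2d)) · ∑_{j ~ i, j core at t} (x_j^t − x_j^{t−1})`. -/
theorem core_difference_identity
    {V : Type*} [Fintype V] [DecidableEq V]
    (G : SimpleGraph V) [DecidableRel G.Adj]
    (hdeg : ∀ i : V, 0 < G.degree i)
    (ε : ℝ) (x : ℕ → V → ℝ)
    (hupd : ∀ (t : ℕ) (i : V),
      x (t + 1) i =
        (ε + (x t i - ε) / 2) * (if ε < x t i then (1 : ℝ) else 0)
          + x t i * (1 - (if ε < x t i then (1 : ℝ) else 0))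
          + (1 / 2) * ∑ j ∈ G.neighborFinset i,
              (if ε < x t j then (1 : ℝ) else 0) * (x t j - ε) / (G.degree j))
    (d : ℕ) (hd : 1 ≤ d) (hreg : G.IsRegularOfDegree d)
    (t : ℕ) (ht : 1 ≤ t) (i : V)
    (hcore_prev : ε < x (t - 1) i) (hcore : ε < x t i)
    (hstatus : ∀ j ∈ insert i (G.neighborFinset i), (ε < x t j ↔ ε < x (t - 1) j)) :
    x (t + 1) i - x t i =
      (x t i - x (t - 1) i) / 2 +
        (1 / (2 * (d : ℝ))) *
          ∑ j ∈ G.neighborFinset i,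
            (if ε < x t j then x t j - x (t - 1) j else 0) := by
  obtain ⟨s, rfl⟩ : ∃ s, t = s + 1 := ⟨t - 1, (Nat.succ_pred_eq_of_pos ht).symm⟩
  simp only [Nat.add_sub_cancel] at hcore_prev hstatus ⊢
  have hd0 : (d : ℝ) ≠ 0 := by positivity
  have h1 := hupd (s + 1) i
  have h0 := hupd s i
  rw [if_pos hcore] at h1
  rw [if_pos hcore_prev] at h0
  set S1 := ∑ j ∈ G.neighborFinset i,
      (if ε < x (s + 1) j then (1 : ℝ) else 0) * (x (s + 1) j - ε) / (G.degree j) with hS1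
  set S0 := ∑ j ∈ G.neighborFinset i,
      (if ε < x s j then (1 : ℝ) else 0) * (x s j - ε) / (G.degree j) with hS0
  set T := ∑ j ∈ G.neighborFinset i,
      (if ε < x (s + 1) j then x (s + 1) j - x s j else 0) with hT
  have key : T = (d : ℝ) * (S1 - S0) := by
    rw [hS1, hS0, hT, ← Finset.sum_sub_distrib, Finset.mul_sum]
    refine Finset.sum_congr rfl fun j hj => ?_
    have hdj : (G.degree j : ℝ) = d := by exact_mod_cast hreg j
    have hst := hstatus j (Finset.mem_insert_of_mem hj)
    rw [hdj]
    by_cases h : ε < x (s + 1) j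
    · rw [if_pos h, if_pos h, if_pos (hst.mp h)]
      field_simp
      ring
    · rw [if_neg h, if_neg h, if_neg (fun hc => h (hst.mpr hc))]
      ring
  rw [h1, key]
  field_simp
  linear_combination (-2) * h0
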